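/- With notation as in the classification of GL_M(O) ⋉ U⁻_{M,N}(F)-orbits on Gr_N: the stabilizer of L_{(λ,(θ,θ'))} in U⁻_{M,N}(F) is contained in the kernel of the character χ (sending (u_{ij}) to the t^{-1}-coefficient of Σ_i u_{i+1,i} over rows i = M+1,...,N-1) if and only if θ_{M+1} ≤ θ'_1 ≤ θ'_2 ≤ ... ≤ θ'_{N-M-1}. -/

import Mathlib

/- Common setup: `F = ℂ((t))` the field of formal Laurent series, `O = ℂ[[t]]` its ring of
integers (elements with no negative coefficients), `tpow k = t^k`.  `InGLO A` says that the
square matrix `A` lies in `GL(O)`, i.e. both `A` and an inverse of `A` have entries in `O`. -/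

noncomputable section

abbrev F : Type := LaurentSeries ℂ

/-- `t^k` for `k : ℤ`, where `t` is the uniformizer of `ℂ((t))`. -/
noncomputable def tpow (k : ℤ) : F := (HahnSeries.single (1 : ℤ) (1 : ℂ) : F) ^ k

/-- The ring of integers `O = ℂ[[t]] ⊆ ℂ((t))`. -/
def Oint : Set F := {f : F | ∀ m : ℤ, m < 0 → f.coeff m = 0}

/-- `A ∈ GL_n(O)`. -/
def InGLO {n : ℕ} (A : Matrix (Fin n) (Fin n) F) : Prop :=
  ∃ B : Matrix (Fin n) (Fin n) F,
    (∀ i j, A i j ∈ Oint) ∧ (∀ i j, B i j ∈ Oint) ∧ A * B = 1 ∧ B * A = 1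

/-- Block-diagonal embedding of an `M×M` matrix into the top-left corner of an `n×n`
matrix, with `1`'s on the rest of the diagonal. -/
noncomputable def embTop (M n : ℕ) (g : Matrix (Fin M) (Fin M) F) :
    Matrix (Fin n) (Fin n) F := fun i j =>
  if hi : (i : ℕ) < M then
    (if hj : (j : ℕ) < M then g ⟨i, hi⟩ ⟨j, hj⟩ else 0)
  else (if (i : ℕ) = (j : ℕ) then 1 else 0)

/-- `u ∈ U⁻_{M,N}(F)`, the unipotent radical of the negative parabolic of type
`(M+1,1,…,1)` in `GL_N`: identity diagonal, and (0-based) the only nonzero off-diagonal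
entries are in rows `i ≥ M+1` and columns `j < i`. -/
def InUminus (M : ℕ) {n : ℕ} (u : Matrix (Fin n) (Fin n) F) : Prop :=
  (∀ i, u i i = 1) ∧
  ∀ i j : Fin n, i ≠ j → ((i : ℕ) ≤ M ∨ (i : ℕ) ≤ (j : ℕ)) → u i j = 0

/-- The representative `L_{(λ,(θ,θ'))} ∈ GL_N(F)`, `N = M+1+K`: the upper-left
`(M+1)×(M+1)` block has diagonal `t^{λ_i+θ_i}` (`i ≤ M`) and last row
`(t^{θ_1},…,t^{θ_{M+1}})`, and the lower-right block is `diag(t^{θ'_1},…,t^{θ'_K})`. -/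
noncomputable def LmatN (M K : ℕ) (lam : Fin M → ℤ) (th : Fin (M + 1) → ℤ)
    (th' : Fin K → ℤ) : Matrix (Fin (M + 1 + K)) (Fin (M + 1 + K)) F := fun i j =>
  if hi : (i : ℕ) < M then
    (if (i : ℕ) = (j : ℕ) then tpow (lam ⟨i, hi⟩ + th ⟨i, by omega⟩) else 0)
  else if hi2 : (i : ℕ) = M then
    (if hj : (j : ℕ) < M + 1 then tpow (th ⟨j, hj⟩) else 0)
  else if (i : ℕ) = (j : ℕ) then
    tpow (th' ⟨(i : ℕ) - (M + 1), by have := i.isLt; omega⟩)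
  else 0

/-- The character `χ : U⁻_{M,N}(F) → ℂ`, sending `u` to the `t^{-1}`-coefficient of the
sum of the subdiagonal entries `u_{i+1,i}` over rows `i = M+1, …, N-1` (1-based). -/
noncomputable def chiU (M K : ℕ)
    (u : Matrix (Fin (M + 1 + K)) (Fin (M + 1 + K)) F) : ℂ :=
  ∑ k : Fin K,
    (u ⟨M + 1 + (k : ℕ), by have := k.isLt; omega⟩
       ⟨M + (k : ℕ), by have := k.isLt; omega⟩).coeff (-1)

/-- For a dominant `(λ,θ)`, the stabilizer of `L_{(λ,(θ,θ'))} ∈ Gr_N` in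
`U⁻_{M,N}(F)` is contained in `ker χ` if and only if
`θ_{M+1} ≤ θ'_1 ≤ θ'_2 ≤ … ≤ θ'_{N-M-1}`. -/
/- ### auxiliary lemmas about `tpow` and `Oint` -/

lemma tne : (HahnSeries.single (1 : ℤ) (1 : ℂ) : F) ≠ 0 := by
  simp [HahnSeries.single_ne_zero]

lemma tpow_eq_single (k : ℤ) : tpow k = HahnSeries.single k (1 : ℂ) := by
  have hnat : ∀ n : ℕ, tpow (n : ℤ) = HahnSeries.single (n : ℤ) (1 : ℂ) := by
    intro n
    rw [tpow, zpow_natCast, HahnSeries.single_pow]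
    simp
  induction k using Int.rec with
  | ofNat n => exact hnat n
  | negSucc n =>
      have h1 : tpow (Int.negSucc n) * tpow ((n+1 : ℕ) : ℤ) = 1 := by
        rw [tpow, tpow, ← zpow_add₀ tne,
          show Int.negSucc n + ((n+1:ℕ):ℤ) = 0 by simp [Int.negSucc_eq], zpow_zero]
      rw [hnat] at h1
      have h2 : (HahnSeries.single (Int.negSucc n) (1:ℂ) : F) *
          HahnSeries.single ((n+1:ℕ) : ℤ) (1:ℂ) = 1 := by
        rw [HahnSeries.single_mul_single]
        rw [show Int.negSucc n + ((n+1:ℕ):ℤ) = 0 by simp [Int.negSucc_eq], one_mul,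
          HahnSeries.single_zero_one]
      calc tpow (Int.negSucc n)
          = tpow (Int.negSucc n) * ((HahnSeries.single ((n+1:ℕ):ℤ) (1:ℂ) : F) *
              HahnSeries.single (Int.negSucc n) (1:ℂ)) := by
            rw [mul_comm (HahnSeries.single ((n+1:ℕ):ℤ) (1:ℂ) : F), h2, mul_one]
        _ = HahnSeries.single (Int.negSucc n) (1:ℂ) := by rw [← mul_assoc, h1, one_mul]

lemma tpow_mul_coeff (k : ℤ) (f : F) (m : ℤ) : (tpow k * f).coeff m = f.coeff (m - k) := by
  rw [tpow_eq_single]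
  have : m = (m - k) + k := by ring
  rw [this, HahnSeries.coeff_single_mul_add, one_mul]
  ring_nf

lemma tpow_coeff (k m : ℤ) : (tpow k).coeff m = if m = k then 1 else 0 := by
  rw [tpow_eq_single, HahnSeries.coeff_single]
  split <;> rfl

lemma tpow_add' (a b : ℤ) : tpow (a + b) = tpow a * tpow b := zpow_add₀ tne a b

lemma tpow_zero' : tpow 0 = 1 := zpow_zero _

lemma tpow_mem_O {k : ℤ} (hk : 0 ≤ k) : tpow k ∈ Oint := by
  intro m hm; rw [tpow_coeff]; simp only [ite_eq_right_iff]; intro h; omega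

lemma one_mem_O : (1 : F) ∈ Oint := by
  intro m hm; rw [HahnSeries.coeff_one]; simp only [ite_eq_right_iff]; intro h; omega

lemma zero_mem_O : (0 : F) ∈ Oint := by intro m _; simp

lemma add_mem_O {f g : F} (hf : f ∈ Oint) (hg : g ∈ Oint) : f + g ∈ Oint := by
  intro m hm; rw [HahnSeries.coeff_add, hf m hm, hg m hm, add_zero]

lemma neg_mem_O {f : F} (hf : f ∈ Oint) : -f ∈ Oint := by
  intro m hm; rw [HahnSeries.coeff_neg, hf m hm, neg_zero]

/- ### index bookkeeping -/

variable {M K : ℕ}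

def Ik (M K : ℕ) (k : Fin K) : Fin (M + 1 + K) := ⟨M + 1 + (k : ℕ), by have := k.isLt; omega⟩

def Jk (M K : ℕ) (k : Fin K) : Fin (M + 1 + K) := ⟨M + (k : ℕ), by have := k.isLt; omega⟩

def cexp (M : ℕ) {K : ℕ} (th : Fin (M + 1) → ℤ) (th' : Fin K → ℤ) (k : Fin K) : ℤ :=
  if h : (k : ℕ) = 0 then th (Fin.last M)
  else th' ⟨(k : ℕ) - 1, by have := k.isLt; omega⟩

section Lmat

variable (lam : Fin M → ℤ) (th : Fin (M + 1) → ℤ) (th' : Fin K → ℤ)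

lemma Jk_val (k : Fin K) : ((Jk M K k : Fin (M+1+K)) : ℕ) = M + (k : ℕ) := rfl

lemma Ik_val (k : Fin K) : ((Ik M K k : Fin (M+1+K)) : ℕ) = M + 1 + (k : ℕ) := rfl

/-- The column `Jk k` of `L` is supported at `Jk k` with value `tpow (cexp k)`. -/
lemma Lcol (k : Fin K) (m : Fin (M + 1 + K)) :
    LmatN M K lam th th' m (Jk M K k) =
      if m = Jk M K k then tpow (cexp M th th' k) else 0 := by
  have hJv : ((Jk M K k : Fin (M+1+K)) : ℕ) = M + (k : ℕ) := rfl
  simp only [LmatN]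
  rcases lt_trichotomy (m : ℕ) M with hm | hm | hm
  · rw [dif_pos hm,
      if_neg (show ¬ (m : ℕ) = ((Jk M K k : Fin (M+1+K)) : ℕ) by omega),
      if_neg (show ¬ m = Jk M K k from fun he => by
        have := congrArg Fin.val he; omega)]
  · rw [dif_neg (show ¬ (m : ℕ) < M by omega), dif_pos hm]
    by_cases hk : (k : ℕ) = 0
    · have hmj : m = Jk M K k := Fin.ext (by omega)
      rw [if_pos hmj, dif_pos (show ((Jk M K k : Fin (M+1+K)) : ℕ) < M + 1 by omega)]
      simp only [cexp, dif_pos hk]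
      congr 1
      exact congrArg th (Fin.ext (by simp [Fin.val_last]; omega))
    · rw [if_neg (show ¬ m = Jk M K k from fun he => by
          have := congrArg Fin.val he; omega),
        dif_neg (show ¬ ((Jk M K k : Fin (M+1+K)) : ℕ) < M + 1 by omega)]
  · rw [dif_neg (show ¬ (m : ℕ) < M by omega), dif_neg (show ¬ (m : ℕ) = M by omega)]
    by_cases hmj : m = Jk M K k
    · have hk : 1 ≤ (k : ℕ) := by have := congrArg Fin.val hmj; omega
      rw [if_pos (show (m : ℕ) = ((Jk M K k : Fin (M+1+K)) : ℕ) from congrArg Fin.val hmj),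
        if_pos hmj]
      simp only [cexp, dif_neg (show ¬ (k : ℕ) = 0 by omega)]
      exact congrArg (fun z => tpow (th' z))
        (Fin.ext (by simp only []; have := congrArg Fin.val hmj; omega))
    · rw [if_neg (show ¬ (m : ℕ) = ((Jk M K k : Fin (M+1+K)) : ℕ) from
          fun hv => hmj (Fin.ext hv)), if_neg hmj]

/-- Rows of `L` below row `M` are diagonal. -/
lemma Lrow (i m : Fin (M + 1 + K)) (hi : M < (i : ℕ)) :
    LmatN M K lam th th' i m =
      if m = i then tpow (th' ⟨(i : ℕ) - (M + 1), by have := i.isLt; omega⟩) else 0 := by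
  simp only [LmatN]
  rw [dif_neg (show ¬ (i : ℕ) < M by omega), dif_neg (show ¬ (i : ℕ) = M by omega)]
  by_cases h : m = i
  · rw [if_pos (show (i : ℕ) = (m : ℕ) from (congrArg Fin.val h).symm), if_pos h]
  · rw [if_neg (show ¬ (i : ℕ) = (m : ℕ) from fun hv => h (Fin.ext hv.symm)), if_neg h]

/-- Columns of `L` to the right of column `M` are diagonal. -/
lemma Lcol' (i m : Fin (M + 1 + K)) (hi : M < (i : ℕ)) :
    LmatN M K lam th th' m i =
      if m = i then tpow (th' ⟨(i : ℕ) - (M + 1), by have := i.isLt; omega⟩) else 0 := by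
  simp only [LmatN]
  rcases lt_trichotomy (m : ℕ) M with hm | hm | hm
  · rw [dif_pos hm, if_neg (show ¬ (m : ℕ) = (i : ℕ) by omega),
      if_neg (show ¬ m = i from fun he => by have := congrArg Fin.val he; omega)]
  · rw [dif_neg (show ¬ (m : ℕ) < M by omega), dif_pos hm,
      dif_neg (show ¬ (i : ℕ) < M + 1 by omega),
      if_neg (show ¬ m = i from fun he => by have := congrArg Fin.val he; omega)]
  · rw [dif_neg (show ¬ (m : ℕ) < M by omega), dif_neg (show ¬ (m : ℕ) = M by omega)]
    by_cases h : m = i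
    · rw [if_pos (show (m : ℕ) = (i : ℕ) from congrArg Fin.val h), if_pos h]
      exact congrArg (fun z => tpow (th' z))
        (Fin.ext (by simp only []; have := congrArg Fin.val h; omega))
    · rw [if_neg (show ¬ (m : ℕ) = (i : ℕ) from fun hv => h (Fin.ext hv)), if_neg h]

/-- Rows of `L` above row `M` are diagonal. -/
lemma LrowTop (i m : Fin (M + 1 + K)) (hi : (i : ℕ) < M) :
    LmatN M K lam th th' i m =
      if m = i then tpow (lam ⟨i, hi⟩ + th ⟨i, by omega⟩) else 0 := by
  simp only [LmatN]
  rw [dif_pos hi]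
  by_cases h : m = i
  · rw [if_pos (show (i : ℕ) = (m : ℕ) from (congrArg Fin.val h).symm), if_pos h]
  · rw [if_neg (show ¬ (i : ℕ) = (m : ℕ) from fun hv => h (Fin.ext hv.symm)), if_neg h]

/-- Row `M` of `L`. -/
lemma LrowM (i m : Fin (M + 1 + K)) (hi : (i : ℕ) = M) :
    LmatN M K lam th th' i m =
      if hm : (m : ℕ) < M + 1 then tpow (th ⟨m, hm⟩) else 0 := by
  simp only [LmatN]
  rw [dif_neg (show ¬ (i : ℕ) < M by omega), dif_pos hi]

end Lmat

section Main

variable (lam : Fin M → ℤ) (th : Fin (M + 1) → ℤ) (th' : Fin K → ℤ)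

lemma key_entry (u C : Matrix (Fin (M+1+K)) (Fin (M+1+K)) F)
    (heq : u * LmatN M K lam th th' = LmatN M K lam th th' * C) (k : Fin K) :
    u (Ik M K k) (Jk M K k) * tpow (cexp M th th' k)
      = tpow (th' k) * C (Ik M K k) (Jk M K k) := by
  have h := congrFun (congrFun heq (Ik M K k)) (Jk M K k)
  rw [Matrix.mul_apply, Matrix.mul_apply] at h
  have hL : ∀ m, LmatN M K lam th th' m (Jk M K k) =
      if m = Jk M K k then tpow (cexp M th th' k) else 0 := Lcol lam th th' k
  have hR : ∀ m, LmatN M K lam th th' (Ik M K k) m =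
      if m = Ik M K k then tpow (th' k) else 0 := by
    intro m
    rw [Lrow lam th th' (Ik M K k) m (by rw [Ik_val]; omega)]
    congr 2
    exact congrArg th' (Fin.ext (show M + 1 + (k : ℕ) - (M + 1) = (k : ℕ) by omega))
  simp only [hL, hR, mul_ite, mul_zero, ite_mul, zero_mul,
    Finset.sum_ite_eq, Finset.sum_ite_eq', Finset.mem_univ, if_true] at h
  exact h

lemma easy_dir (hcond : ∀ k : Fin K, cexp M th th' k ≤ th' k)
    (u C : Matrix (Fin (M+1+K)) (Fin (M+1+K)) F)
    (hC : InGLO C) (heq : u * LmatN M K lam th th' = LmatN M K lam th th' * C) :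
    chiU M K u = 0 := by
  unfold chiU
  apply Finset.sum_eq_zero
  intro k _
  obtain ⟨B, hCO, -, -, -⟩ := hC
  have h1 := key_entry lam th th' u C heq k
  set c := cexp M th th' k with hc
  have h2 : u (Ik M K k) (Jk M K k) = tpow (th' k - c) * C (Ik M K k) (Jk M K k) := by
    calc u (Ik M K k) (Jk M K k)
        = u (Ik M K k) (Jk M K k) * tpow c * tpow (-c) := by
          rw [mul_assoc, ← tpow_add', add_neg_cancel, tpow_zero', mul_one]
      _ = tpow (th' k) * C (Ik M K k) (Jk M K k) * tpow (-c) := by rw [h1]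
      _ = tpow (th' k - c) * C (Ik M K k) (Jk M K k) := by
          rw [mul_right_comm, ← tpow_add', sub_eq_add_neg]
  show (u (Ik M K k) (Jk M K k)).coeff (-1) = 0
  rw [h2, tpow_mul_coeff]
  exact hCO _ _ _ (by have := hcond k; omega)

end Main

section Hard

lemma Ik_ne_Jk (k : Fin K) : Ik M K k ≠ Jk M K k := by
  intro h
  have := congrArg Fin.val h
  rw [Ik_val, Jk_val] at this
  omega

noncomputable def wvec (M K : ℕ) (lam : Fin M → ℤ) (k : Fin K) : Fin (M + 1 + K) → F :=
  fun b =>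
    if b = Jk M K k then tpow (-1)
    else if hb : (b : ℕ) < M ∧ (k : ℕ) = 0 then -(tpow (-1 - lam ⟨b, hb.1⟩)) else 0

noncomputable def Xmat (M K : ℕ) (lam : Fin M → ℤ) (k : Fin K) :
    Matrix (Fin (M+1+K)) (Fin (M+1+K)) F :=
  Matrix.of fun a b => if a = Ik M K k then wvec M K lam k b else 0

noncomputable def Emat (M K : ℕ) (b0 : ℤ) (k : Fin K) :
    Matrix (Fin (M+1+K)) (Fin (M+1+K)) F :=
  Matrix.of fun a b => if a = Ik M K k ∧ b = Jk M K k then tpow b0 else 0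

lemma wvec_Ik (lam : Fin M → ℤ) (k : Fin K) : wvec M K lam k (Ik M K k) = 0 := by
  unfold wvec
  rw [if_neg (Ik_ne_Jk k), dif_neg (by rw [not_and]; intro h; exact absurd h (by rw [Ik_val]; omega))]

lemma uMat_InU (lam : Fin M → ℤ) (k : Fin K) : InUminus M (1 + Xmat M K lam k) := by
  constructor
  · intro a
    rw [Matrix.add_apply, Matrix.one_apply_eq]
    show (1 : F) + (if a = Ik M K k then wvec M K lam k a else 0) = 1
    by_cases ha : a = Ik M K k
    · rw [if_pos ha, ha, wvec_Ik, add_zero]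
    · rw [if_neg ha, add_zero]
  · intro a b hab hcond
    rw [Matrix.add_apply, Matrix.one_apply_ne hab]
    show (0 : F) + (if a = Ik M K k then wvec M K lam k b else 0) = 0
    rw [zero_add]
    by_cases ha : a = Ik M K k
    · rw [if_pos ha]
      have hav : (a : ℕ) = M + 1 + (k : ℕ) := by rw [ha, Ik_val]
      have hbv : M + 1 + (k : ℕ) ≤ (b : ℕ) := by
        rcases hcond with h | h
        · omega
        · omega
      unfold wvec
      rw [if_neg (fun he => by have := congrArg Fin.val he; rw [Jk_val] at this; omega),
        dif_neg (by rw [not_and]; intro h; omega)]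
    · rw [if_neg ha]

lemma chi_uMat (lam : Fin M → ℤ) (k : Fin K) : chiU M K (1 + Xmat M K lam k) = 1 := by
  unfold chiU
  have hterm : ∀ k' : Fin K,
      ((1 + Xmat M K lam k) (Ik M K k') (Jk M K k')).coeff (-1)
        = if k' = k then 1 else 0 := by
    intro k'
    rw [Matrix.add_apply, Matrix.one_apply_ne (Ik_ne_Jk k')]
    show ((0 : F) + (if Ik M K k' = Ik M K k then wvec M K lam k (Jk M K k') else 0)).coeff (-1)
      = if k' = k then 1 else 0
    rw [zero_add]
    by_cases hk' : k' = k
    · rw [if_pos (by rw [hk']), hk', if_pos rfl]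
      unfold wvec
      rw [if_pos rfl, tpow_coeff, if_pos rfl]
    · rw [if_neg (fun he => hk' (by
        have := congrArg Fin.val he
        rw [Ik_val, Ik_val] at this
        exact Fin.ext (by omega))), if_neg hk']
      simp
  calc (∑ k' : Fin K, ((1 + Xmat M K lam k)
          ⟨M + 1 + (k' : ℕ), by have := k'.isLt; omega⟩
          ⟨M + (k' : ℕ), by have := k'.isLt; omega⟩).coeff (-1))
      = ∑ k' : Fin K, if k' = k then (1:ℂ) else 0 := by
        refine Finset.sum_congr rfl fun k' _ => ?_
        exact hterm k'
    _ = 1 := by rw [Finset.sum_ite_eq' Finset.univ k fun _ => (1:ℂ)]; simp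

lemma Emat_mul_Emat (b0 b1 : ℤ) (k : Fin K) :
    Emat M K b0 k * Emat M K b1 k = 0 := by
  rw [← Matrix.ext_iff]
  intro a b
  rw [Matrix.mul_apply, Matrix.zero_apply]
  apply Finset.sum_eq_zero
  intro m _
  show (if a = Ik M K k ∧ m = Jk M K k then tpow b0 else 0) *
      (if m = Ik M K k ∧ b = Jk M K k then tpow b1 else 0) = 0
  by_cases h : a = Ik M K k ∧ m = Jk M K k
  · rw [if_neg (show ¬(m = Ik M K k ∧ b = Jk M K k) from
      fun hc => Ik_ne_Jk k (hc.1.symm.trans h.2)), mul_zero]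
  · rw [if_neg h, zero_mul]

lemma CMat_InGLO {b0 : ℤ} (hb0 : 0 ≤ b0) (k : Fin K) : InGLO (1 + Emat M K b0 k) := by
  refine ⟨1 - Emat M K b0 k, ?_, ?_, ?_, ?_⟩
  · intro i j
    rw [Matrix.add_apply]
    apply add_mem_O
    · by_cases h : i = j
      · rw [h, Matrix.one_apply_eq]; exact one_mem_O
      · rw [Matrix.one_apply_ne h]; exact zero_mem_O
    · show (if i = Ik M K k ∧ j = Jk M K k then tpow b0 else 0) ∈ Oint
      split
      · exact tpow_mem_O hb0
      · exact zero_mem_O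
  · intro i j
    rw [Matrix.sub_apply]
    rw [sub_eq_add_neg]
    apply add_mem_O
    · by_cases h : i = j
      · rw [h, Matrix.one_apply_eq]; exact one_mem_O
      · rw [Matrix.one_apply_ne h]; exact zero_mem_O
    · apply neg_mem_O
      show (if i = Ik M K k ∧ j = Jk M K k then tpow b0 else 0) ∈ Oint
      split
      · exact tpow_mem_O hb0
      · exact zero_mem_O
  · have := Emat_mul_Emat (M := M) (K := K) b0 b0 k
    calc (1 + Emat M K b0 k) * (1 - Emat M K b0 k)
        = 1 - Emat M K b0 k * Emat M K b0 k := by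
          rw [add_mul, one_mul, mul_sub, mul_one]
          abel
      _ = 1 := by rw [this, sub_zero]
  · have := Emat_mul_Emat (M := M) (K := K) b0 b0 k
    calc (1 - Emat M K b0 k) * (1 + Emat M K b0 k)
        = 1 - Emat M K b0 k * Emat M K b0 k := by
          rw [sub_mul, one_mul, mul_add, mul_one]
          abel
      _ = 1 := by rw [this, sub_zero]

end Hard

section Hard2

variable (lam : Fin M → ℤ) (th : Fin (M + 1) → ℤ) (th' : Fin K → ℤ)

lemma Ssum (k : Fin K) (b : Fin (M + 1 + K)) :
    ∑ m, wvec M K lam k m * LmatN M K lam th th' m b =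
      if b = Jk M K k then tpow (cexp M th th' k - 1) else 0 := by
  by_cases hk : (k : ℕ) = 0
  · -- k = 0
    have hw : ∀ m : Fin (M + 1 + K), wvec M K lam k m =
        (if m = Jk M K k then tpow (-1) else 0) +
        (if hm : (m : ℕ) < M then -(tpow (-1 - lam ⟨m, hm⟩)) else 0) := by
      intro m
      unfold wvec
      by_cases h1 : m = Jk M K k
      · rw [if_pos h1, if_pos h1, dif_neg (show ¬(m : ℕ) < M by
          have := congrArg Fin.val h1; rw [Jk_val] at this; omega), add_zero]
      · rw [if_neg h1, if_neg h1, zero_add]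
        by_cases h2 : (m : ℕ) < M
        · rw [dif_pos (⟨h2, hk⟩ : (m : ℕ) < M ∧ (k : ℕ) = 0), dif_pos h2]
        · rw [dif_neg (fun hc => h2 hc.1), dif_neg h2]
    simp only [hw, add_mul, Finset.sum_add_distrib]
    have hs1 : (∑ m, (if m = Jk M K k then tpow (-1) else 0) * LmatN M K lam th th' m b)
        = tpow (-1) * LmatN M K lam th th' (Jk M K k) b := by
      simp only [ite_mul, zero_mul, Finset.sum_ite_eq', Finset.mem_univ, if_true]
    have hs2 : (∑ m : Fin (M + 1 + K), (if hm : (m : ℕ) < M then -(tpow (-1 - lam ⟨m, hm⟩)) else 0) *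
          LmatN M K lam th th' m b)
        = if hb2 : (b : ℕ) < M then
            -(tpow (-1 - lam ⟨b, hb2⟩)) * tpow (lam ⟨b, hb2⟩ + th ⟨b, by omega⟩) else 0 := by
      rw [Finset.sum_eq_single b]
      · by_cases hb2 : (b : ℕ) < M
        · rw [dif_pos hb2, dif_pos hb2, LrowTop lam th th' b b hb2, if_pos rfl]
        · rw [dif_neg hb2, dif_neg hb2, zero_mul]
      · intro m _ hm
        by_cases h2 : (m : ℕ) < M
        · rw [dif_pos h2, LrowTop lam th th' m b h2,
            if_neg (show ¬ b = m from fun he => hm he.symm), mul_zero]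
        · rw [dif_neg h2, zero_mul]
      · intro hb3; exact absurd (Finset.mem_univ b) hb3
    rw [hs1, hs2, LrowM lam th th' (Jk M K k) b (by rw [Jk_val]; omega)]
    rcases lt_trichotomy (b : ℕ) M with hb2 | hb2 | hb2
    · rw [dif_pos (show (b : ℕ) < M + 1 by omega), dif_pos hb2,
        if_neg (show ¬ b = Jk M K k from fun he => by
          have := congrArg Fin.val he; rw [Jk_val] at this; omega)]
      have e1 : tpow (-1 : ℤ) * tpow (th ⟨b, (show (b : ℕ) < M + 1 by omega)⟩)
          = tpow (-1 + th ⟨b, (show (b : ℕ) < M + 1 by omega)⟩) := (tpow_add' _ _).symm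
      have e2 : tpow (-1 - lam ⟨b, hb2⟩) *
            tpow (lam ⟨b, hb2⟩ + th ⟨b, (show (b : ℕ) < M + 1 by omega)⟩)
          = tpow (-1 + th ⟨b, (show (b : ℕ) < M + 1 by omega)⟩) := by
        rw [← tpow_add']; congr 1; ring
      rw [e1, neg_mul (tpow (-1 - lam ⟨b, hb2⟩)), e2]
      exact add_neg_cancel _
    · have hbJ : b = Jk M K k := Fin.ext (by rw [Jk_val]; omega)
      rw [if_pos hbJ, dif_pos (show (b : ℕ) < M + 1 by omega),
        dif_neg (show ¬(b : ℕ) < M by omega), add_zero, ← tpow_add']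
      congr 1
      simp only [cexp, dif_pos hk]
      have hb3 : (⟨(b : ℕ), (show (b : ℕ) < M + 1 by omega)⟩ : Fin (M + 1)) = Fin.last M :=
        Fin.ext (by simp only [Fin.val_last]; omega)
      rw [hb3]
      ring
    · rw [dif_neg (show ¬(b : ℕ) < M + 1 by omega), dif_neg (show ¬(b : ℕ) < M by omega),
        mul_zero, add_zero,
        if_neg (show ¬ b = Jk M K k from fun he => by
          have := congrArg Fin.val he; rw [Jk_val] at this; omega)]
  · -- k ≠ 0
    have hw : ∀ m : Fin (M + 1 + K), wvec M K lam k m =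
        if m = Jk M K k then tpow (-1) else 0 := by
      intro m
      unfold wvec
      by_cases h1 : m = Jk M K k
      · rw [if_pos h1, if_pos h1]
      · rw [if_neg h1, if_neg h1, dif_neg (fun hc => hk hc.2)]
    simp only [hw, ite_mul, zero_mul, Finset.sum_ite_eq', Finset.mem_univ, if_true]
    rw [Lrow lam th th' (Jk M K k) b (by rw [Jk_val]; omega)]
    by_cases hbJ : b = Jk M K k
    · rw [if_pos hbJ, if_pos hbJ, ← tpow_add']
      congr 1
      simp only [cexp, dif_neg hk]
      have h2 : th' ⟨((Jk M K k : Fin (M+1+K)) : ℕ) - (M + 1),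
            (show ((Jk M K k : Fin (M+1+K)) : ℕ) - (M + 1) < K by
              rw [Jk_val]; have := k.isLt; omega)⟩
          = th' ⟨(k : ℕ) - 1, (show (k : ℕ) - 1 < K by have := k.isLt; omega)⟩ :=
        congrArg th' (Fin.ext (by show ((Jk M K k : Fin (M+1+K)) : ℕ) - (M+1) = (k : ℕ) - 1
                                  rw [Jk_val]; omega))
      rw [h2]
      ring
    · rw [if_neg hbJ, if_neg hbJ, mul_zero]

lemma XL_eq_LE (k : Fin K) :
    Xmat M K lam k * LmatN M K lam th th' =
      LmatN M K lam th th' * Emat M K (cexp M th th' k - th' k - 1) k := by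
  rw [← Matrix.ext_iff]
  intro a b
  rw [Matrix.mul_apply, Matrix.mul_apply]
  -- LHS
  have hLHS : (∑ m, Xmat M K lam k a m * LmatN M K lam th th' m b)
      = if a = Ik M K k then (∑ m, wvec M K lam k m * LmatN M K lam th th' m b) else 0 := by
    by_cases ha : a = Ik M K k
    · rw [if_pos ha]
      refine Finset.sum_congr rfl fun m _ => ?_
      show (if a = Ik M K k then wvec M K lam k m else 0) * _ = _
      rw [if_pos ha]
    · rw [if_neg ha]
      apply Finset.sum_eq_zero
      intro m _
      show (if a = Ik M K k then wvec M K lam k m else 0) * _ = 0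
      rw [if_neg ha, zero_mul]
  rw [hLHS]
  -- RHS
  have hRHS : (∑ m, LmatN M K lam th th' a m *
        Emat M K (cexp M th th' k - th' k - 1) k m b)
      = if a = Ik M K k ∧ b = Jk M K k then tpow (cexp M th th' k - 1) else 0 := by
    by_cases hb : b = Jk M K k
    · have hstep : ∀ m : Fin (M + 1 + K),
          LmatN M K lam th th' a m * Emat M K (cexp M th th' k - th' k - 1) k m b
            = if m = Ik M K k then
                LmatN M K lam th th' a m * tpow (cexp M th th' k - th' k - 1) else 0 := by
        intro m
        show LmatN M K lam th th' a m *
            (if m = Ik M K k ∧ b = Jk M K k then tpow (cexp M th th' k - th' k - 1) else 0) = _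
        by_cases hm : m = Ik M K k
        · rw [if_pos ⟨hm, hb⟩, if_pos hm]
        · rw [if_neg (fun hc => hm hc.1), if_neg hm, mul_zero]
      simp only [hstep, Finset.sum_ite_eq', Finset.mem_univ, if_true]
      rw [Lcol' lam th th' (Ik M K k) a (by rw [Ik_val]; omega)]
      by_cases ha : a = Ik M K k
      · rw [if_pos ha, if_pos ⟨ha, hb⟩, ← tpow_add']
        congr 1
        have h2 : th' ⟨((Ik M K k : Fin (M+1+K)) : ℕ) - (M + 1),
              (show ((Ik M K k : Fin (M+1+K)) : ℕ) - (M + 1) < K by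
                rw [Ik_val]; have := k.isLt; omega)⟩ = th' k :=
          congrArg th' (Fin.ext (by
            show ((Ik M K k : Fin (M+1+K)) : ℕ) - (M + 1) = (k : ℕ)
            rw [Ik_val]; omega))
        rw [h2]
        ring
      · rw [if_neg ha, if_neg (fun hc => ha hc.1), zero_mul]
    · rw [if_neg (fun hc => hb hc.2)]
      apply Finset.sum_eq_zero
      intro m _
      show LmatN M K lam th th' a m *
          (if m = Ik M K k ∧ b = Jk M K k then tpow (cexp M th th' k - th' k - 1) else 0) = 0
      rw [if_neg (fun hc => hb hc.2), mul_zero]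
  rw [hRHS, Ssum lam th th' k b]
  by_cases ha : a = Ik M K k
  · rw [if_pos ha]
    by_cases hb : b = Jk M K k
    · rw [if_pos hb, if_pos ⟨ha, hb⟩]
    · rw [if_neg hb, if_neg (fun hc => hb hc.2)]
  · rw [if_neg ha, if_neg (fun hc => ha hc.1)]

lemma hard_dir
    (h : ∀ u C : Matrix (Fin (M + 1 + K)) (Fin (M + 1 + K)) F,
        InUminus M u → InGLO C →
        u * LmatN M K lam th th' = LmatN M K lam th th' * C → chiU M K u = 0)
    (k : Fin K) : cexp M th th' k ≤ th' k := by
  by_contra hlt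
  push_neg at hlt
  have hb0 : (0 : ℤ) ≤ cexp M th th' k - th' k - 1 := by omega
  have heq : (1 + Xmat M K lam k) * LmatN M K lam th th' =
      LmatN M K lam th th' * (1 + Emat M K (cexp M th th' k - th' k - 1) k) := by
    rw [add_mul, one_mul, mul_add, mul_one, XL_eq_LE lam th th' k]
  have := h (1 + Xmat M K lam k) (1 + Emat M K (cexp M th th' k - th' k - 1) k)
    (uMat_InU lam k) (CMat_InGLO hb0 k) heq
  rw [chi_uMat lam k] at this
  exact one_ne_zero this

end Hard2


lemma cexp_iff (th : Fin (M + 1) → ℤ) (th' : Fin K → ℤ) :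
    (∀ k : Fin K, cexp M th th' k ≤ th' k) ↔
      (Monotone th' ∧ ∀ k : Fin K, th (Fin.last M) ≤ th' k) := by
  constructor
  · intro h
    have step : ∀ n : ℕ, ∀ a b : Fin K, (b : ℕ) = (a : ℕ) + n → th' a ≤ th' b := by
      intro n
      induction n with
      | zero =>
          intro a b hab
          rw [show a = b from Fin.ext (by omega)]
      | succ n ih =>
          intro a b hab
          have hb' : (a : ℕ) + n < K := by have := b.isLt; omega
          refine le_trans (ih a ⟨(a : ℕ) + n, hb'⟩ rfl) ?_
          have hk := h b
          have hbne : ¬ (b : ℕ) = 0 := by omega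
          simp only [cexp, dif_neg hbne] at hk
          exact le_trans (le_of_eq (congrArg th'
            (Fin.ext (show (a : ℕ) + n = (b : ℕ) - 1 by omega)))) hk
    constructor
    · intro a b hab
      exact step ((b : ℕ) - (a : ℕ)) a b (by have := Fin.le_def.mp hab; omega)
    · intro k
      have hK : 0 < K := lt_of_le_of_lt (Nat.zero_le _) k.isLt
      have h0 := h ⟨0, hK⟩
      simp only [cexp, dif_pos (show ((⟨0, hK⟩ : Fin K) : ℕ) = 0 from rfl)] at h0
      exact le_trans h0 (step (k : ℕ) ⟨0, hK⟩ k (show (k : ℕ) = 0 + (k : ℕ) by omega))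
  · rintro ⟨hmono, hlast⟩ k
    by_cases hk : (k : ℕ) = 0
    · simp only [cexp, dif_pos hk]
      exact hlast k
    · simp only [cexp, dif_neg hk]
      exact hmono (Fin.le_def.mpr (show (k : ℕ) - 1 ≤ (k : ℕ) by omega))

theorem stmt2 (M K : ℕ) (lam : Fin M → ℤ) (th : Fin (M + 1) → ℤ) (th' : Fin K → ℤ)
    (hlam : Monotone lam) (hth : Monotone th) :
    (∀ u C : Matrix (Fin (M + 1 + K)) (Fin (M + 1 + K)) F,
        InUminus M u → InGLO C →
        u * LmatN M K lam th th' = LmatN M K lam th th' * C → chiU M K u = 0)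
    ↔ (Monotone th' ∧ ∀ k : Fin K, th (Fin.last M) ≤ th' k) := by
  rw [← cexp_iff th th']
  constructor
  · intro h k
    exact hard_dir lam th th' h k
  · intro h u C hu hC heq
    exact easy_dir lam th th' h u C hC heq
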